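/- Let k, m ≥ 2. The K-algebra homomorphism from K[t_1,…,t_m] ⊗_K T_km^{(0)} to T_km determined by t_i ↦ tr(y_i)·I (for i = 1,…,m) and by the inclusion of T_km^{(0)} into T_km is an isomorphism of K-algebras; likewise, the K-algebra homomorphism from K[t_1,…,t_m] ⊗_K C_km^{(0)} to C_km determined by t_i ↦ tr(y_i)·I and the inclusion of C_km^{(0)} is an isomorphism. -/

import Mathlib

open scoped BigOperators
noncomputable section

/-- `Ω = K[y_pq^(i)]`, matrices over the polynomial ring in `k²m` variables. -/
abbrev Mat (K : Type) [Field K] (k m : ℕ) :=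
  Matrix (Fin k) (Fin k) (MvPolynomial (Fin m × Fin k × Fin k) K)

/-- The generic `k × k` matrices `y_i = (y_pq^(i))`. -/
def genY (K : Type) [Field K] (k m : ℕ) (i : Fin m) : Mat K k m :=
  Matrix.of fun p q => MvPolynomial.X (i, p, q)

/-- The scalar matrix `f · I` for `f ∈ Ω`. -/
def scalarOf (K : Type) [Field K] (k m : ℕ)
    (f : MvPolynomial (Fin m × Fin k × Fin k) K) : Mat K k m :=
  algebraMap _ _ f

/-- `R_km`: the generic matrix algebra, generated by `y_1, …, y_m`. -/
def Rkm (K : Type) [Field K] (k m : ℕ) : Subalgebra K (Mat K k m) :=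
  Algebra.adjoin K (Set.range (genY K k m))

/-- `C_km`: the pure trace algebra, generated by the `tr(y_{i_1} ⋯ y_{i_l}) · I`, `l ≥ 1`. -/
def Ckm (K : Type) [Field K] (k m : ℕ) : Subalgebra K (Mat K k m) :=
  Algebra.adjoin K
    {x | ∃ (l : ℕ) (w : Fin (l + 1) → Fin m),
      x = scalarOf K k m (Matrix.trace ((List.ofFn fun j => genY K k m (w j)).prod))}

/-- `T_km`: the mixed trace algebra, generated by `R_km ∪ C_km`. -/
def Tkm (K : Type) [Field K] (k m : ℕ) : Subalgebra K (Mat K k m) :=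
  Rkm K k m ⊔ Ckm K k m

/-- The generic traceless matrices `z_i = y_i - (1/k)·tr(y_i)·I`. -/
def genZ (K : Type) [Field K] (k m : ℕ) (i : Fin m) : Mat K k m :=
  genY K k m i - (k : K)⁻¹ • scalarOf K k m (Matrix.trace (genY K k m i))

/-- `W_km`: the algebra generated by the generic traceless matrices `z_1, …, z_m`. -/
def Wkm (K : Type) [Field K] (k m : ℕ) : Subalgebra K (Mat K k m) :=
  Algebra.adjoin K (Set.range (genZ K k m))

/-- `C_km⁰`: the algebra generated by the `tr(z_{i_1} ⋯ z_{i_l}) · I`, `l ≥ 1`. -/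
def Ckm0 (K : Type) [Field K] (k m : ℕ) : Subalgebra K (Mat K k m) :=
  Algebra.adjoin K
    {x | ∃ (l : ℕ) (w : Fin (l + 1) → Fin m),
      x = scalarOf K k m (Matrix.trace ((List.ofFn fun j => genZ K k m (w j)).prod))}

/-- `T_km⁰`: the algebra generated by `W_km ∪ C_km⁰`. -/
def Tkm0 (K : Type) [Field K] (k m : ℕ) : Subalgebra K (Mat K k m) :=
  Wkm K k m ⊔ Ckm0 K k m

/-- The subspace of matrices all of whose entries have total degree at most `n`,
i.e. `M_k(Ω_{≤n})`. -/
def degLE (K : Type) [Field K] (k m n : ℕ) : Submodule K (Mat K k m) where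
  carrier := {a | ∀ p q, (a p q).totalDegree ≤ n}
  add_mem' := by
    intro a b ha hb p q
    calc ((a + b) p q).totalDegree = (a p q + b p q).totalDegree := by simp [Matrix.add_apply]
    _ ≤ max (a p q).totalDegree (b p q).totalDegree := MvPolynomial.totalDegree_add _ _
    _ ≤ n := max_le (ha p q) (hb p q)
  zero_mem' := by intro p q; simp
  smul_mem' := by
    intro c a ha p q
    calc ((c • a) p q).totalDegree = (c • a p q).totalDegree := by simp [Matrix.smul_apply]
    _ ≤ (a p q).totalDegree := MvPolynomial.totalDegree_smul_le _ _
    _ ≤ n := ha p q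

open scoped TensorProduct

/-- The `K`-algebra map `K[t_1, …, t_m] → M_k(Ω)` sending `t_i ↦ tr(y_i)·I`. -/
def trY (K : Type) [Field K] (k m : ℕ) : MvPolynomial (Fin m) K →ₐ[K] Mat K k m :=
  (IsScalarTower.toAlgHom K (MvPolynomial (Fin m × Fin k × Fin k) K) (Mat K k m)).comp
    (MvPolynomial.aeval fun i => Matrix.trace (genY K k m i))

lemma trY_commute (K : Type) [Field K] (k m : ℕ) (p : MvPolynomial (Fin m) K)
    (x : Mat K k m) : Commute (trY K k m p) x :=
  Algebra.commutes (MvPolynomial.aeval (fun i => Matrix.trace (genY K k m i)) p) x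

/-- The map `K[t_1, …, t_m] ⊗_K T_km⁰ → M_k(Ω)` determined by `t_i ↦ tr(y_i)·I` and the
inclusion of `T_km⁰`. -/
def tensorT (K : Type) [Field K] (k m : ℕ) :
    MvPolynomial (Fin m) K ⊗[K] ↥(Tkm0 K k m) →ₐ[K] Mat K k m :=
  Algebra.TensorProduct.lift (trY K k m) (Tkm0 K k m).val fun p c => trY_commute K k m p c

/-- The map `K[t_1, …, t_m] ⊗_K C_km⁰ → M_k(Ω)` determined by `t_i ↦ tr(y_i)·I` and the
inclusion of `C_km⁰`. -/
def tensorC (K : Type) [Field K] (k m : ℕ) :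
    MvPolynomial (Fin m) K ⊗[K] ↥(Ckm0 K k m) →ₐ[K] Mat K k m :=
  Algebra.TensorProduct.lift (trY K k m) (Ckm0 K k m).val fun p c => trY_commute K k m p c

open TensorProduct in
open Classical in
noncomputable def MvPolynomial.scalarRTensor {R N σ : Type*} [CommSemiring R] [AddCommMonoid N] [Module R N] :
    MvPolynomial σ R ⊗[R] N ≃ₗ[R] (σ →₀ ℕ) →₀ N :=
  (LinearEquiv.rTensor N (AddMonoidAlgebra.coeffLinearEquiv R :
    MvPolynomial σ R ≃ₗ[R] (σ →₀ ℕ) →₀ R)).trans (TensorProduct.finsuppScalarLeft R N (σ →₀ ℕ))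

open TensorProduct in
theorem MvPolynomial.scalarRTensor_apply_tmul_apply {R N σ : Type*} [CommSemiring R] [AddCommMonoid N] [Module R N]
    (p : MvPolynomial σ R) (n : N) (d : σ →₀ ℕ) :
    MvPolynomial.scalarRTensor (p ⊗ₜ[R] n) d = MvPolynomial.coeff d p • n := by
  classical
  simp only [MvPolynomial.scalarRTensor, LinearEquiv.trans_apply, LinearEquiv.rTensor_tmul]
  convert TensorProduct.finsuppScalarLeft_apply_tmul_apply _ _ _
  rfl

namespace Stmt5Aux

set_option synthInstance.maxHeartbeats 1000000
set_option maxHeartbeats 1600000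

open MvPolynomial

variable (K : Type) [Field K] (k m : ℕ)

abbrev Om := MvPolynomial (Fin m × Fin k × Fin k) K

lemma scalarOf_smul (a : K) (f : Om K k m) :
    scalarOf K k m (a • f) = a • scalarOf K k m f := by
  rw [scalarOf, scalarOf, Algebra.smul_def a f, map_mul, ← IsScalarTower.algebraMap_apply,
    ← Algebra.smul_def]

lemma scalarOf_neg (f : Om K k m) : scalarOf K k m (-f) = -scalarOf K k m f := by
  simp only [scalarOf, map_neg]

lemma scalarOf_mul (f g : Om K k m) :
    scalarOf K k m (f * g) = scalarOf K k m f * scalarOf K k m g := by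
  simp only [scalarOf, map_mul]

lemma trace_scalar_mul (f : Om K k m) (a : Mat K k m) :
    Matrix.trace (scalarOf K k m f * a) = f * Matrix.trace a := by
  rw [scalarOf, ← Algebra.smul_def, Matrix.trace_smul, smul_eq_mul]

lemma map_eq_ofFn {α β : Type} (g : α → β) (L : List α) :
    L.map g = List.ofFn (fun j => g (L.get j)) := by
  conv_lhs => rw [← List.ofFn_get L]
  rw [List.map_ofFn]
  rfl

lemma trace_word_mem (g : Fin m → Mat K k m) (A : Subalgebra K (Mat K k m))
    (hgen : {x | ∃ (l : ℕ) (w : Fin (l + 1) → Fin m),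
        x = scalarOf K k m (Matrix.trace ((List.ofFn fun j => g (w j)).prod))} ⊆ A) :
    ∀ L : List (Fin m), scalarOf K k m (Matrix.trace ((L.map g).prod)) ∈ A := by
  intro L
  cases L with
  | nil =>
      simp only [List.map_nil, List.prod_nil, Matrix.trace_one, Fintype.card_fin]
      rw [scalarOf, map_natCast]
      exact Subalgebra.natCast_mem A k
  | cons i L' =>
      apply hgen
      exact ⟨L'.length, fun j => (i :: L').get j, by rw [map_eq_ofFn]; rfl⟩

lemma word_trace_mem (A : Subalgebra K (Mat K k m)) (g b : Fin m → Mat K k m)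
    (c : Fin m → Om K k m)
    (hb : ∀ i, b i = g i + scalarOf K k m (c i))
    (hcA : ∀ i, scalarOf K k m (c i) ∈ A)
    (hbase : ∀ L : List (Fin m), scalarOf K k m (Matrix.trace ((L.map g).prod)) ∈ A) :
    ∀ L : List (Fin m), scalarOf K k m (Matrix.trace ((L.map b).prod)) ∈ A := by
  classical
  set s : Set (Mat K k m) :=
    {x | ∃ (f : Om K k m) (L : List (Fin m)),
      scalarOf K k m f ∈ A ∧ x = scalarOf K k m f * (L.map g).prod} with hs
  have key : ∀ x ∈ AddSubmonoid.closure s, ∀ i, x * b i ∈ AddSubmonoid.closure s := by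
    intro x hx
    induction hx using AddSubmonoid.closure_induction with
    | mem x hxs =>
        obtain ⟨f, L, hf, rfl⟩ := hxs
        intro i
        rw [hb i, mul_add]
        have h1 : scalarOf K k m f * (L.map g).prod * g i
            = scalarOf K k m f * (((L ++ [i]).map g).prod) := by
          rw [List.map_append, List.prod_append, mul_assoc]; simp
        have h2 : scalarOf K k m f * (L.map g).prod * scalarOf K k m (c i)
            = scalarOf K k m (f * c i) * (L.map g).prod := by
          simp only [scalarOf, map_mul]
          rw [mul_assoc, ← Algebra.commutes (c i) ((L.map g).prod), ← mul_assoc]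
        rw [h1, h2]
        exact add_mem (AddSubmonoid.subset_closure ⟨f, L ++ [i], hf, rfl⟩)
          (AddSubmonoid.subset_closure ⟨f * c i, L,
            by rw [scalarOf_mul]; exact mul_mem hf (hcA i), rfl⟩)
    | zero => intro i; rw [zero_mul]; exact zero_mem _
    | add x y hx hy ihx ihy =>
        intro i; rw [add_mul]; exact add_mem (ihx i) (ihy i)
  have hword : ∀ L : List (Fin m), ((L.map b).prod) ∈ AddSubmonoid.closure s := by
    intro L
    induction L using List.reverseRecOn with
    | nil => exact AddSubmonoid.subset_closure ⟨1, [], by simp only [scalarOf, map_one]; exact one_mem A, by simp [scalarOf]⟩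
    | append_singleton L i ih =>
        rw [List.map_append, List.prod_append, List.map_singleton, List.prod_singleton]
        exact key _ ih i
  have htr : ∀ x ∈ AddSubmonoid.closure s, scalarOf K k m (Matrix.trace x) ∈ A := by
    intro x hx
    induction hx using AddSubmonoid.closure_induction with
    | mem x hxs =>
        obtain ⟨f, L, hf, rfl⟩ := hxs
        rw [trace_scalar_mul, scalarOf_mul]
        exact mul_mem hf (hbase L)
    | zero =>
        rw [Matrix.trace_zero]
        simp only [scalarOf, map_zero]
        exact zero_mem _
    | add x y hx hy ihx ihy =>
        rw [Matrix.trace_add]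
        simp only [scalarOf, map_add]
        exact add_mem ihx ihy
  intro L
  exact htr _ (hword L)

lemma genY_trace_mem_Ckm (i : Fin m) :
    scalarOf K k m (Matrix.trace (genY K k m i)) ∈ Ckm K k m :=
  Algebra.subset_adjoin ⟨0, fun _ => i, by simp⟩

lemma genZ_eq (i : Fin m) : genZ K k m i = genY K k m i
    + scalarOf K k m (-((k:K)⁻¹ • Matrix.trace (genY K k m i))) := by
  rw [genZ, scalarOf_neg, scalarOf_smul, ← sub_eq_add_neg]

lemma genY_eq (i : Fin m) : genY K k m i = genZ K k m i
    + scalarOf K k m ((k:K)⁻¹ • Matrix.trace (genY K k m i)) := by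
  rw [genZ, scalarOf_smul, sub_add_cancel]

lemma zword_trace_mem_Ckm :
    ∀ L : List (Fin m), scalarOf K k m (Matrix.trace ((L.map (genZ K k m)).prod)) ∈ Ckm K k m := by
  apply word_trace_mem K k m (Ckm K k m) (genY K k m) (genZ K k m)
    (fun i => -((k:K)⁻¹ • Matrix.trace (genY K k m i)))
  · exact genZ_eq K k m
  · intro i
    rw [scalarOf_neg, scalarOf_smul]
    exact neg_mem (Subalgebra.smul_mem _ (genY_trace_mem_Ckm K k m i) _)
  · exact trace_word_mem K k m (genY K k m) (Ckm K k m) Algebra.subset_adjoin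

lemma Ckm0_le_Ckm : Ckm0 K k m ≤ Ckm K k m := by
  rw [Ckm0]
  apply Algebra.adjoin_le
  rintro x ⟨l, w, rfl⟩
  have := zword_trace_mem_Ckm K k m (List.ofFn w)
  rwa [List.map_ofFn] at this

/-- `D = K[tr(y_i)] ∨ C⁰`. -/
def Dsub : Subalgebra K (Mat K k m) :=
  Algebra.adjoin K (Set.range fun i => scalarOf K k m (Matrix.trace (genY K k m i)))
    ⊔ Ckm0 K k m

lemma Ckm0_le_D : Ckm0 K k m ≤ Dsub K k m := by
  rw [Dsub]; exact le_sup_right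

lemma trYscal_mem_D (i : Fin m) :
    scalarOf K k m (Matrix.trace (genY K k m i)) ∈ Dsub K k m := by
  have h : Algebra.adjoin K
      (Set.range fun i => scalarOf K k m (Matrix.trace (genY K k m i))) ≤ Dsub K k m := by
    rw [Dsub]; exact le_sup_left
  exact h (Algebra.subset_adjoin ⟨i, rfl⟩)

lemma zword_trace_mem_D :
    ∀ L : List (Fin m), scalarOf K k m (Matrix.trace ((L.map (genZ K k m)).prod)) ∈ Dsub K k m := by
  apply trace_word_mem K k m (genZ K k m) (Dsub K k m)
  intro x hx
  exact Ckm0_le_D K k m (Algebra.subset_adjoin hx)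

lemma yword_trace_mem_D :
    ∀ L : List (Fin m), scalarOf K k m (Matrix.trace ((L.map (genY K k m)).prod)) ∈ Dsub K k m := by
  apply word_trace_mem K k m (Dsub K k m) (genZ K k m) (genY K k m)
    (fun i => (k:K)⁻¹ • Matrix.trace (genY K k m i))
  · exact genY_eq K k m
  · intro i
    rw [scalarOf_smul]
    exact Subalgebra.smul_mem _ (trYscal_mem_D K k m i) _
  · exact zword_trace_mem_D K k m

lemma Ckm_le_D : Ckm K k m ≤ Dsub K k m := by
  rw [Ckm]
  apply Algebra.adjoin_le
  rintro x ⟨l, w, rfl⟩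
  have := yword_trace_mem_D K k m (List.ofFn w)
  rwa [List.map_ofFn] at this

lemma Rkm_le_Tkm : Rkm K k m ≤ Tkm K k m := by
  rw [Tkm]; exact le_sup_left

lemma Ckm_le_Tkm : Ckm K k m ≤ Tkm K k m := by
  rw [Tkm]; exact le_sup_right

lemma Wkm_le_Tkm0 : Wkm K k m ≤ Tkm0 K k m := by
  rw [Tkm0]; exact le_sup_left

lemma Ckm0_le_Tkm0 : Ckm0 K k m ≤ Tkm0 K k m := by
  rw [Tkm0]; exact le_sup_right

lemma genZ_mem_Tkm (i : Fin m) : genZ K k m i ∈ Tkm K k m := by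
  rw [genZ]
  refine sub_mem ?_ (Subalgebra.smul_mem _ ?_ _)
  · exact Rkm_le_Tkm K k m (Algebra.subset_adjoin ⟨i, rfl⟩)
  · exact Ckm_le_Tkm K k m (genY_trace_mem_Ckm K k m i)

lemma Tkm0_le_Tkm : Tkm0 K k m ≤ Tkm K k m := by
  rw [Tkm0]
  apply sup_le
  · rw [Wkm]
    apply Algebra.adjoin_le
    rintro x ⟨i, rfl⟩
    exact genZ_mem_Tkm K k m i
  · exact (Ckm0_le_Ckm K k m).trans (Ckm_le_Tkm K k m)

lemma trY_X (i : Fin m) : trY K k m (X i) = scalarOf K k m (Matrix.trace (genY K k m i)) := by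
  simp [trY, scalarOf]

lemma trY_mem_Ckm (p : MvPolynomial (Fin m) K) : trY K k m p ∈ Ckm K k m := by
  induction p using MvPolynomial.induction_on with
  | C a =>
      rw [show (C a : MvPolynomial (Fin m) K) = algebraMap K _ a from rfl, AlgHom.commutes]
      exact Subalgebra.algebraMap_mem _ a
  | add p q hp hq => rw [map_add]; exact add_mem hp hq
  | mul_X p i hp =>
      rw [map_mul]
      exact mul_mem hp (by rw [trY_X]; exact genY_trace_mem_Ckm K k m i)

open scoped TensorProduct in
lemma lift_tmul' (S : Subalgebra K (Mat K k m))
    (hc : ∀ (p : MvPolynomial (Fin m) K) (c : S), Commute (trY K k m p) (S.val c))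
    (p : MvPolynomial (Fin m) K) (c : S) :
    Algebra.TensorProduct.lift (trY K k m) S.val hc (p ⊗ₜ[K] c) = trY K k m p * (c : Mat K k m) := by
  rw [Algebra.TensorProduct.lift_tmul]
  rfl

lemma tensorT_tmul (p : MvPolynomial (Fin m) K) (c : Tkm0 K k m) :
    tensorT K k m (p ⊗ₜ[K] c) = trY K k m p * (c : Mat K k m) :=
  lift_tmul' K k m (Tkm0 K k m) _ p c

lemma tensorC_tmul (p : MvPolynomial (Fin m) K) (c : Ckm0 K k m) :
    tensorC K k m (p ⊗ₜ[K] c) = trY K k m p * (c : Mat K k m) :=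
  lift_tmul' K k m (Ckm0 K k m) _ p c

lemma range_tensorT_le : (tensorT K k m).range ≤ Tkm K k m := by
  rintro x ⟨y, rfl⟩
  show tensorT K k m y ∈ Tkm K k m
  induction y using TensorProduct.induction_on with
  | zero => rw [map_zero]; exact zero_mem _
  | tmul p c =>
      rw [tensorT_tmul]
      exact mul_mem (Ckm_le_Tkm K k m (trY_mem_Ckm K k m p)) (Tkm0_le_Tkm K k m c.2)
  | add x y hx hy => rw [map_add]; exact add_mem hx hy

lemma range_tensorC_le : (tensorC K k m).range ≤ Ckm K k m := by
  rintro x ⟨y, rfl⟩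
  show tensorC K k m y ∈ Ckm K k m
  induction y using TensorProduct.induction_on with
  | zero => rw [map_zero]; exact zero_mem _
  | tmul p c =>
      rw [tensorC_tmul]
      exact mul_mem (trY_mem_Ckm K k m p) (Ckm0_le_Ckm K k m c.2)
  | add x y hx hy => rw [map_add]; exact add_mem hx hy

lemma D_le_rangeT : Dsub K k m ≤ (tensorT K k m).range := by
  rw [Dsub]
  apply sup_le
  · apply Algebra.adjoin_le
    rintro x ⟨i, rfl⟩
    refine ⟨X i ⊗ₜ[K] 1, ?_⟩
    show tensorT K k m (X i ⊗ₜ[K] 1) = _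
    rw [tensorT_tmul, trY_X]; simp
  · intro x hx
    refine ⟨1 ⊗ₜ[K] ⟨x, Ckm0_le_Tkm0 K k m hx⟩, ?_⟩
    show tensorT K k m (1 ⊗ₜ[K] _) = _
    rw [tensorT_tmul, map_one, one_mul]

lemma D_le_rangeC : Dsub K k m ≤ (tensorC K k m).range := by
  rw [Dsub]
  apply sup_le
  · apply Algebra.adjoin_le
    rintro x ⟨i, rfl⟩
    refine ⟨X i ⊗ₜ[K] 1, ?_⟩
    show tensorC K k m (X i ⊗ₜ[K] 1) = _
    rw [tensorC_tmul, trY_X]; simp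
  · intro x hx
    refine ⟨1 ⊗ₜ[K] ⟨x, hx⟩, ?_⟩
    show tensorC K k m (1 ⊗ₜ[K] _) = _
    rw [tensorC_tmul, map_one, one_mul]

lemma Tkm_le_rangeT : Tkm K k m ≤ (tensorT K k m).range := by
  rw [Tkm]
  apply sup_le
  · rw [Rkm]
    apply Algebra.adjoin_le
    rintro x ⟨i, rfl⟩
    rw [genY_eq K k m i]
    refine add_mem ?_ ?_
    · refine ⟨1 ⊗ₜ[K] ⟨genZ K k m i, Wkm_le_Tkm0 K k m (Algebra.subset_adjoin ⟨i, rfl⟩)⟩, ?_⟩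
      show tensorT K k m (1 ⊗ₜ[K] _) = _
      rw [tensorT_tmul, map_one, one_mul]
    · rw [scalarOf_smul]
      exact Subalgebra.smul_mem _ (D_le_rangeT K k m (trYscal_mem_D K k m i)) _
  · exact (Ckm_le_D K k m).trans (D_le_rangeT K k m)

lemma Ckm_le_rangeC : Ckm K k m ≤ (tensorC K k m).range :=
  (Ckm_le_D K k m).trans (D_le_rangeC K k m)

/-! ### The substitution `ψ` and injectivity -/

abbrev Om' := MvPolynomial (Fin m) (Om K k m)

abbrev Mat' := Matrix (Fin k) (Fin k) (Om' K k m)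

/-- `ψ : Ω → Ω[t]` substituting `y_pq^(i) ↦ y_pq^(i) + δ_pq (t_i - tr(y_i))/k`. -/
def psi : Om K k m →ₐ[K] Om' K k m :=
  aeval fun v => C (X v) +
    if v.2.1 = v.2.2 then (k:K)⁻¹ • (X v.1 - C (Matrix.trace (genY K k m v.1))) else 0

/-- The constant embedding `Ω → Ω[t]` as a `K`-algebra map. -/
def CAlg : Om K k m →ₐ[K] Om' K k m := IsScalarTower.toAlgHom K _ _

lemma CAlg_apply (f : Om K k m) : CAlg K k m f = C f := rfl

lemma trace_genY_eq (i : Fin m) :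
    Matrix.trace (genY K k m i) = ∑ p : Fin k, X (i, p, p) := by
  simp [Matrix.trace, Matrix.diag, genY]

lemma psi_X (v : Fin m × Fin k × Fin k) :
    psi K k m (X v) = C (X v) +
      if v.2.1 = v.2.2 then (k:K)⁻¹ • (X v.1 - C (Matrix.trace (genY K k m v.1))) else 0 := by
  rw [psi, aeval_X]

lemma psi_trace_genY (hk0 : (k:K) ≠ 0) (i : Fin m) :
    psi K k m (Matrix.trace (genY K k m i)) = X i := by
  have h : ∀ p : Fin k, psi K k m (X (i, p, p))
      = C (X (i, p, p)) + (k:K)⁻¹ • (X i - C (Matrix.trace (genY K k m i))) := by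
    intro p
    rw [psi_X, if_pos rfl]
  conv_lhs => rw [trace_genY_eq, map_sum]
  rw [Finset.sum_congr rfl (fun p _ => h p), Finset.sum_add_distrib, ← map_sum,
    ← trace_genY_eq, Finset.sum_const, Finset.card_univ, Fintype.card_fin,
    ← Nat.cast_smul_eq_nsmul K, smul_smul, mul_inv_cancel₀ hk0, one_smul]
  ring

lemma genZ_apply (i : Fin m) (p q : Fin k) :
    genZ K k m i p q
      = X (i, p, q) - (k:K)⁻¹ • (if p = q then Matrix.trace (genY K k m i) else 0) := by
  rw [genZ]
  simp [Matrix.sub_apply, Matrix.smul_apply, scalarOf, Matrix.algebraMap_matrix_apply, genY,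
    smul_ite]

lemma psi_genZ_apply (hk0 : (k:K) ≠ 0) (i : Fin m) (p q : Fin k) :
    psi K k m (genZ K k m i p q) = CAlg K k m (genZ K k m i p q) := by
  by_cases hpq : p = q
  · subst hpq
    rw [genZ_apply, if_pos rfl, map_sub, map_sub, map_smul, map_smul, psi_X, if_pos rfl,
      psi_trace_genY K k m hk0]
    have h2 : (CAlg K k m) (X (i, p, p)) = C (X (i, p, p)) := rfl
    have h3 : (CAlg K k m) (Matrix.trace (genY K k m i))
        = C (Matrix.trace (genY K k m i)) := rfl
    rw [h2, h3, smul_sub]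
    abel
  · rw [genZ_apply, if_neg hpq, smul_zero, sub_zero, psi_X,
      if_neg (show ¬ ((i, p, q).2.1 = (i, p, q).2.2) from hpq), add_zero]
    rfl

def Psi : Mat K k m →ₐ[K] Mat' K k m := (psi K k m).mapMatrix

def CMat : Mat K k m →ₐ[K] Mat' K k m := (CAlg K k m).mapMatrix

lemma Psi_genZ (hk0 : (k:K) ≠ 0) (i : Fin m) :
    Psi K k m (genZ K k m i) = CMat K k m (genZ K k m i) := by
  ext p q : 1
  simp only [Psi, CMat, AlgHom.mapMatrix_apply, Matrix.map_apply]
  exact psi_genZ_apply K k m hk0 i p q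

lemma mapMatrix_algebraMap (φ : Om K k m →ₐ[K] Om' K k m) (f : Om K k m) :
    φ.mapMatrix (algebraMap (Om K k m) (Mat K k m) f)
      = algebraMap (Om' K k m) (Mat' K k m) (φ f) := by
  ext p q : 1
  simp only [AlgHom.mapMatrix_apply, Matrix.map_apply, Matrix.algebraMap_matrix_apply,
    apply_ite φ, map_zero, Algebra.algebraMap_self, RingHom.id_apply]

lemma trace_mapMatrix (φ : Om K k m →ₐ[K] Om' K k m) (M : Mat K k m) :
    Matrix.trace (φ.mapMatrix M) = φ (Matrix.trace M) := by
  simp only [Matrix.trace, AlgHom.mapMatrix_apply, Matrix.diag, Matrix.map_apply, map_sum]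

lemma psi_agree (hk0 : (k:K) ≠ 0) :
    ∀ x ∈ Tkm0 K k m, Psi K k m x = CMat K k m x := by
  intro x hx
  rw [Tkm0, Wkm, Ckm0, ← Algebra.adjoin_union] at hx
  induction hx using Algebra.adjoin_induction with
  | mem x hxs =>
      rcases hxs with h | h
      · obtain ⟨i, rfl⟩ := h
        exact Psi_genZ K k m hk0 i
      · obtain ⟨l, w, rfl⟩ := h
        set M : Mat K k m := (List.ofFn fun j => genZ K k m (w j)).prod with hM
        have hMz : Psi K k m M = CMat K k m M := by
          rw [hM, map_list_prod, map_list_prod, List.map_ofFn, List.map_ofFn]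
          exact congrArg List.prod
            (congrArg List.ofFn (funext fun j => Psi_genZ K k m hk0 (w j)))
        have h1 : psi K k m (Matrix.trace M) = CAlg K k m (Matrix.trace M) := by
          calc psi K k m (Matrix.trace M) = Matrix.trace (Psi K k m M) :=
                (trace_mapMatrix K k m _ M).symm
            _ = Matrix.trace (CMat K k m M) := by rw [hMz]
            _ = CAlg K k m (Matrix.trace M) := trace_mapMatrix K k m _ M
        show Psi K k m (scalarOf K k m (Matrix.trace M))
          = CMat K k m (scalarOf K k m (Matrix.trace M))
        rw [scalarOf, Psi, CMat, mapMatrix_algebraMap, mapMatrix_algebraMap, h1]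
  | algebraMap r => rw [AlgHom.commutes, AlgHom.commutes]
  | add x y hx hy ihx ihy => rw [map_add, map_add, ihx, ihy]
  | mul x y hx hy ihx ihy => rw [map_mul, map_mul, ihx, ihy]

lemma Psi_trY (hk0 : (k:K) ≠ 0) (p : MvPolynomial (Fin m) K) :
    Psi K k m (trY K k m p)
      = algebraMap (Om' K k m) (Mat' K k m)
          (MvPolynomial.map (algebraMap K (Om K k m)) p) := by
  have h1 : trY K k m p
      = algebraMap (Om K k m) (Mat K k m)
          ((aeval fun i => Matrix.trace (genY K k m i)) p) := rfl
  rw [h1, Psi, mapMatrix_algebraMap]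
  congr 1
  have h2 : (psi K k m).comp (aeval fun i => Matrix.trace (genY K k m i))
      = mapAlgHom (Algebra.ofId K (Om K k m)) (σ := Fin m) := by
    apply MvPolynomial.algHom_ext
    intro i
    simp only [AlgHom.comp_apply, aeval_X, mapAlgHom_apply, map_X, eval₂_X]
    exact psi_trace_genY K k m hk0 i
  have h3 := DFunLike.congr_fun h2 p
  simp only [AlgHom.comp_apply, mapAlgHom_apply] at h3
  rw [h3]
  rfl

/-- Coefficient extraction `M_k(Ω[t]) → M_k(Ω)`, entrywise `coeff d`. -/
def coeffMat (d : Fin m →₀ ℕ) : Mat' K k m →ₗ[K] Mat K k m where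
  toFun a := Matrix.of fun p q => MvPolynomial.coeff d (a p q)
  map_add' a b := by
    ext p q : 1
    simp [MvPolynomial.coeff_add]
  map_smul' r a := by
    ext p q : 1
    simp [MvPolynomial.coeff_smul]

open scoped TensorProduct in
lemma lift_injective (hk0 : (k:K) ≠ 0) (S : Subalgebra K (Mat K k m)) (hS : S ≤ Tkm0 K k m)
    (hc : ∀ (p : MvPolynomial (Fin m) K) (c : S), Commute (trY K k m p) (S.val c)) :
    Function.Injective (Algebra.TensorProduct.lift (trY K k m) S.val hc) := by
  set F := Algebra.TensorProduct.lift (trY K k m) S.val hc with hF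
  rw [injective_iff_map_eq_zero]
  intro x hx
  have key : ∀ (y : MvPolynomial (Fin m) K ⊗[K] S) (d : Fin m →₀ ℕ),
      coeffMat K k m d (Psi K k m (F y))
        = ((MvPolynomial.scalarRTensor y d : S) : Mat K k m) := by
    intro y d
    induction y using TensorProduct.induction_on with
    | zero => simp
    | tmul p c =>
        rw [hF, lift_tmul' K k m S hc, map_mul, Psi_trY K k m hk0,
          psi_agree K k m hk0 _ (hS c.2), MvPolynomial.scalarRTensor_apply_tmul_apply]
        ext p' q' : 1
        have hentry : (algebraMap (Om' K k m) (Mat' K k m)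
            (MvPolynomial.map (algebraMap K (Om K k m)) p) * CMat K k m (c : Mat K k m)) p' q'
            = MvPolynomial.map (algebraMap K (Om K k m)) p * C ((c : Mat K k m) p' q') := by
          rw [← Algebra.smul_def, Matrix.smul_apply, smul_eq_mul]
          congr 1
        rw [coeffMat, LinearMap.coe_mk, AddHom.coe_mk]
        simp only [Matrix.of_apply]
        rw [hentry, mul_comm, coeff_C_mul, coeff_map, SetLike.val_smul, Matrix.smul_apply,
          Algebra.smul_def, mul_comm]
    | add y z hy hz =>
        simp only [map_add, Finsupp.add_apply, Subalgebra.coe_add, hy, hz]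
  have hzero : ∀ d, (MvPolynomial.scalarRTensor x d : S) = 0 := by
    intro d
    have := key x d
    rw [hx, map_zero, map_zero] at this
    exact Subtype.ext this.symm
  have : MvPolynomial.scalarRTensor x = 0 := Finsupp.ext fun d => hzero d
  have hx0 := (LinearEquiv.map_eq_zero_iff _).mp this
  exact hx0

end Stmt5Aux
/-- **Procesi.** For `k, m ≥ 2`, the natural maps
`K[tr(y_1), …, tr(y_m)] ⊗_K T_km⁰ → T_km` and `K[tr(y_1), …, tr(y_m)] ⊗_K C_km⁰ → C_km`
are isomorphisms of `K`-algebras, i.e. the induced maps into `M_k(Ω)` are injective with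
range `T_km`, resp. `C_km`. -/
theorem stmt5 (K : Type) [Field K] [CharZero K] (k m : ℕ) (hk : 2 ≤ k) (hm : 2 ≤ m) :
    (Function.Injective (tensorT K k m) ∧ (tensorT K k m).range = Tkm K k m) ∧
    (Function.Injective (tensorC K k m) ∧ (tensorC K k m).range = Ckm K k m) := by
  have hk0 : (k : K) ≠ 0 := Nat.cast_ne_zero.mpr (by omega)
  refine ⟨⟨?_, ?_⟩, ?_, ?_⟩
  · exact Stmt5Aux.lift_injective K k m hk0 (Tkm0 K k m) le_rfl _
  · exact le_antisymm (Stmt5Aux.range_tensorT_le K k m) (Stmt5Aux.Tkm_le_rangeT K k m)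
  · exact Stmt5Aux.lift_injective K k m hk0 (Ckm0 K k m) (Stmt5Aux.Ckm0_le_Tkm0 K k m) _
  · exact le_antisymm (Stmt5Aux.range_tensorC_le K k m) (Stmt5Aux.Ckm_le_rangeC K k m)
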